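/- Given a finite abelian group G containing a Sidon set of order t of size w, there exists a code C ⊆ Z_q^n of constant weight w correcting t insertions of blocks 0^k with |C| ≥ C(n,w)(q-1)^w / |G|. -/

import Mathlib

/-- The Hamming weight of a string over `ℤ_q`. -/
def wt (q : ℕ) (x : List (ZMod q)) : ℕ := x.countP fun a => decide (a ≠ 0)

/-- One insertion of a block `0^k` at some position of the string `x`. -/
def Ins (q k : ℕ) (x y : List (ZMod q)) : Prop :=
  ∃ j ≤ x.length, y = x.take j ++ List.replicate k (0 : ZMod q) ++ x.drop j

/-- `u` successive insertions of blocks `0^k`. -/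
def InsN (q k : ℕ) : ℕ → List (ZMod q) → List (ZMod q) → Prop
  | 0, x, y => y = x
  | u + 1, x, y => ∃ z, Ins q k x z ∧ InsN q k u z y

/-- `C` corrects `t` insertions of blocks `0^k`. -/
def CorrectsIns (q k t : ℕ) (C : Set (List (ZMod q))) : Prop :=
  ∀ x ∈ C, ∀ x' ∈ C, ∀ y,
    (∃ u ≤ t, InsN q k u x y) → (∃ u' ≤ t, InsN q k u' x' y) → x = x'


variable {q : ℕ}

/-- run-of-zeros lengths of a string, a list of length `wt + 1`. -/
def runsL : List (ZMod q) → List ℕ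
  | [] => [0]
  | a :: x => if a = 0 then ((runsL x).headI + 1) :: (runsL x).tail else 0 :: runsL x

/-- the nonzero values of a string, in order. -/
def valsL (x : List (ZMod q)) : List (ZMod q) := x.filter fun a => decide (a ≠ 0)

lemma runsL_ne_nil (x : List (ZMod q)) : runsL x ≠ [] := by
  cases x with
  | nil => simp [runsL]
  | cons a x => by_cases h : a = 0 <;> simp [runsL, h]

lemma runsL_cons_eq (x : List (ZMod q)) : runsL x = (runsL x).headI :: (runsL x).tail := by
  rcases List.exists_cons_of_ne_nil (runsL_ne_nil x) with ⟨h, t, he⟩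
  simp [he]

lemma length_runsL (x : List (ZMod q)) : (runsL x).length = wt q x + 1 := by
  induction x with
  | nil => simp [runsL, wt]
  | cons a x ih =>
    by_cases h : a = 0
    · have := runsL_ne_nil x
      simp only [runsL, h, if_pos rfl, List.length_cons, List.length_tail, ih, wt,
        List.countP_cons]
      simp [wt] at ih ⊢
      omega
    · simp [runsL, h, wt, List.countP_cons, ih]

lemma valsL_cons_zero (x : List (ZMod q)) : valsL (0 :: x) = valsL x := by
  simp [valsL]

lemma valsL_cons_ne (a : ZMod q) (x : List (ZMod q)) (h : a ≠ 0) :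
    valsL (a :: x) = a :: valsL x := by simp [valsL, h]

/-- rebuild a string from runs and values. -/
def buildL : List ℕ → List (ZMod q) → List (ZMod q)
  | r :: rs, v :: vs => List.replicate r 0 ++ v :: buildL rs vs
  | r :: _, [] => List.replicate r 0
  | [], _ => []

lemma buildL_succ (r : ℕ) (rs : List ℕ) (vs : List (ZMod q)) :
    buildL ((r + 1) :: rs) vs = 0 :: buildL (r :: rs) vs := by
  cases vs <;> simp [buildL, List.replicate_succ]

lemma buildL_runsL_valsL (x : List (ZMod q)) : buildL (runsL x) (valsL x) = x := by
  induction x with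
  | nil => simp [runsL, valsL, buildL]
  | cons a x ih =>
    by_cases h : a = 0
    · subst h
      rw [valsL_cons_zero]
      have : runsL (0 :: x) = ((runsL x).headI + 1) :: (runsL x).tail := by simp [runsL]
      rw [this, buildL_succ, ← runsL_cons_eq, ih]
    · rw [valsL_cons_ne a x h]
      have : runsL (a :: x) = 0 :: runsL x := by simp [runsL, h]
      rw [this]
      simp [buildL, ih]

lemma eq_of_runsL_valsL {x y : List (ZMod q)} (h1 : runsL x = runsL y)
    (h2 : valsL x = valsL y) : x = y := by
  rw [← buildL_runsL_valsL x, ← buildL_runsL_valsL y, h1, h2]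
lemma runsL_replicate_append (k : ℕ) (x : List (ZMod q)) :
    runsL (List.replicate k (0 : ZMod q) ++ x) = ((runsL x).headI + k) :: (runsL x).tail := by
  induction k with
  | zero => simpa using runsL_cons_eq x

  | succ k ih =>
    rw [List.replicate_succ, List.cons_append]
    show runsL ((0 : ZMod q) :: _) = _
    simp only [runsL, if_pos rfl, ih]
    simp [Nat.add_assoc]

lemma valsL_insert (j k : ℕ) (x : List (ZMod q)) :
    valsL (x.take j ++ List.replicate k (0 : ZMod q) ++ x.drop j) = valsL x := by
  simp only [valsL, List.filter_append]
  rw [List.filter_replicate]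
  simp [← List.filter_append, List.take_append_drop]

lemma runsL_insert (k : ℕ) : ∀ (j : ℕ) (x : List (ZMod q)), j ≤ x.length →
    ∃ l m r, runsL x = l ++ m :: r ∧
      runsL (x.take j ++ List.replicate k (0 : ZMod q) ++ x.drop j) = l ++ (m + k) :: r
  | 0, x, _ => by
    refine ⟨[], (runsL x).headI, (runsL x).tail, by simpa using runsL_cons_eq x, ?_⟩
    simp [runsL_replicate_append]
  | (j+1), [], h => by simp at h
  | (j+1), a :: x, h => by
    obtain ⟨l, m, r, h1, h2⟩ := runsL_insert k j x (by simpa using h)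
    have hy : (a :: x).take (j+1) ++ List.replicate k (0:ZMod q) ++ (a :: x).drop (j+1)
        = a :: (x.take j ++ List.replicate k (0:ZMod q) ++ x.drop j) := by simp
    rw [hy]
    by_cases ha : a = 0
    · subst ha
      rcases l with _ | ⟨c, l'⟩
      · refine ⟨[], m + 1, r, ?_, ?_⟩
        · simp only [runsL, if_pos rfl, h1]
          simp
        · simp only [runsL, if_pos rfl, h2]
          simp [Nat.add_right_comm]
      · refine ⟨(c+1) :: l', m, r, ?_, ?_⟩
        · simp only [runsL, if_pos rfl, h1]
          simp
        · simp only [runsL, if_pos rfl, h2]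
          simp
    · refine ⟨0 :: l, m, r, ?_, ?_⟩
      · simp only [runsL, if_neg ha, h1]; simp
      · simp only [runsL, if_neg ha, h2]; simp
lemma zipWith_zero_right (k : ℕ) (l : List ℕ) :
    List.zipWith (fun r c => r + c * k) l (List.replicate l.length 0) = l := by
  induction l with
  | nil => rfl
  | cons a l ih => rw [List.length_cons, List.replicate_succ]; simp [ih]

lemma zipWith_comp (k : ℕ) : ∀ (a cs us : List ℕ),
    List.zipWith (fun r c => r + c * k) (List.zipWith (fun r c => r + c * k) a cs) us
      = List.zipWith (fun r c => r + c * k) a (List.zipWith (· + ·) cs us)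
  | [], _, _ => by simp
  | _ :: _, [], _ => by simp
  | _ :: _, _ :: _, [] => by simp
  | a :: as, c :: cs, u :: us => by
    simp only [List.zipWith_cons_cons, zipWith_comp k as cs us, List.cons.injEq, and_true]
    ring

lemma sum_zipWith_add : ∀ (cs us : List ℕ), cs.length = us.length →
    (List.zipWith (· + ·) cs us).sum = cs.sum + us.sum
  | [], [], _ => rfl
  | [], _ :: _, h => by simp at h
  | _ :: _, [], h => by simp at h
  | c :: cs, u :: us, h => by
    simp only [List.zipWith_cons_cons, List.sum_cons, sum_zipWith_add cs us (by simpa using h)]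
    ring

lemma insN_effect (k : ℕ) : ∀ (u : ℕ) (x y : List (ZMod q)), InsN q k u x y →
    valsL y = valsL x ∧ y.length = x.length + u * k ∧
    ∃ us : List ℕ, us.length = (runsL x).length ∧ us.sum = u ∧
      runsL y = List.zipWith (fun r c => r + c * k) (runsL x) us
  | 0, x, y, h => by
    subst h
    refine ⟨rfl, by simp, (runsL y).map fun _ => 0, by simp, by simp, ?_⟩
    rw [List.map_const', zipWith_zero_right]
  | (u+1), x, y, h => by
    obtain ⟨z, ⟨j, hj, hz⟩, hy⟩ := h
    obtain ⟨hv, hlen, us, hus1, hus2, hus3⟩ := insN_effect k u z y hy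
    obtain ⟨l, m, r, h1, h2⟩ := runsL_insert k j x hj
    have hzlen : z.length = x.length + k := by
      subst hz
      simp only [List.length_append, List.length_replicate, List.length_take, List.length_drop]
      omega
    have hvz : valsL z = valsL x := by rw [hz]; exact valsL_insert j k x
    set cs : List ℕ := List.replicate l.length 0 ++ 1 :: List.replicate r.length 0 with hcs
    have hzx : runsL z = List.zipWith (fun r c => r + c * k) (runsL x) cs := by
      rw [h1, hz, h2, hcs, List.zipWith_append (by simp)]
      simp [zipWith_zero_right]
    have hlencs : cs.length = (runsL x).length := by simp [hcs, h1]
    have hlenzx : (runsL z).length = (runsL x).length := by rw [hz, h2, h1]; simp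
    have hmul : (u + 1) * k = u * k + k := by ring
    refine ⟨hv.trans hvz, by omega, List.zipWith (· + ·) cs us, ?_, ?_, ?_⟩
    · rw [List.length_zipWith, hus1, hlenzx, hlencs, min_self]
    · rw [sum_zipWith_add cs us (by omega), hus2]
      simp [hcs]
      omega
    · rw [hus3, hzx, zipWith_comp]
/-- the hash of a string into the group `G`. -/
def hashF {G : Type*} [AddCommGroup G] (k w : ℕ) (b : Fin w → G) (x : List (ZMod q)) : G :=
  ∑ i : Fin w, (((runsL x).getD i 0) / k) • b i

lemma list_sum_getD (l : List ℕ) : l.sum = ∑ i ∈ Finset.range l.length, l.getD i 0 := by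
  induction l with
  | nil => simp
  | cons a l ih =>
    rw [List.sum_cons, List.length_cons, Finset.sum_range_succ', ih]
    simp [add_comm]

lemma multiset_hash {G : Type*} [AddCommGroup G] {w : ℕ} (c : Fin w → ℕ) (b : Fin w → G) :
    ((∑ i : Fin w, Multiset.replicate (c i) i).map b).sum = ∑ i : Fin w, c i • b i := by
  rw [show Multiset.map b (∑ i : Fin w, Multiset.replicate (c i) i)
      = ∑ i : Fin w, Multiset.map b (Multiset.replicate (c i) i) from
    map_sum (Multiset.mapAddMonoidHom b) _ _]
  rw [show (∑ i : Fin w, Multiset.map b (Multiset.replicate (c i) i)).sum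
      = ∑ i : Fin w, (Multiset.map b (Multiset.replicate (c i) i)).sum from
    map_sum Multiset.sumAddMonoidHom _ _]
  simp [Multiset.map_replicate, Multiset.sum_replicate]

lemma multiset_card {w : ℕ} (c : Fin w → ℕ) :
    Multiset.card (∑ i : Fin w, Multiset.replicate (c i) i) = ∑ i : Fin w, c i := by
  rw [Multiset.card_sum]
  simp

lemma multiset_count {w : ℕ} (c : Fin w → ℕ) (i : Fin w) :
    Multiset.count i (∑ j : Fin w, Multiset.replicate (c j) j) = c i := by
  rw [Multiset.count_sum']
  simp [Multiset.count_replicate]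

lemma code_corrects {G : Type*} [AddCommGroup G] (n w t k : ℕ) (hk : 1 ≤ k)
    (b : Fin w → G)
    (hSidon : ∀ s s' : Multiset (Fin w), Multiset.card s ≤ t → Multiset.card s' ≤ t →
      (s.map b).sum = (s'.map b).sum → s = s') (g : G) :
    CorrectsIns q k t {x | x.length = n ∧ wt q x = w ∧ hashF k w b x = g} := by
  rintro x ⟨hxn, hxw, hxg⟩ x' ⟨hxn', hxw', hxg'⟩ y ⟨u, hu, hxy⟩ ⟨u', hu', hxy'⟩
  obtain ⟨hv, hlen, us, hl1, hs1, hr1⟩ := insN_effect k u x y hxy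
  obtain ⟨hv', hlen', us', hl1', hs1', hr1'⟩ := insN_effect k u' x' y hxy'
  have hrx : (runsL x).length = w + 1 := by rw [length_runsL, hxw]
  have hrx' : (runsL x').length = w + 1 := by rw [length_runsL, hxw']
  have huu' : u = u' := by
    rw [hlen, hxn] at hlen'
    rw [hxn'] at hlen'
    exact Nat.eq_of_mul_eq_mul_right hk (by omega)
  -- pointwise equation on runs
  have key := hr1.symm.trans hr1'
  have point : ∀ i, i < w + 1 →
      (runsL x).getD i 0 + us.getD i 0 * k = (runsL x').getD i 0 + us'.getD i 0 * k := by
    intro i hi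
    have hb1 : i < (List.zipWith (fun r c => r + c * k) (runsL x) us).length := by
      rw [List.length_zipWith]; omega
    have hb2 : i < (List.zipWith (fun r c => r + c * k) (runsL x') us').length := by
      rw [List.length_zipWith]; omega
    have := congrArg (fun l => l.getD i 0) key
    rw [List.getD_eq_getElem _ _ hb1, List.getD_eq_getElem _ _ hb2,
      List.getElem_zipWith, List.getElem_zipWith] at this
    rw [List.getD_eq_getElem _ _ (by omega), List.getD_eq_getElem _ _ (by omega),
      List.getD_eq_getElem _ _ (by omega), List.getD_eq_getElem _ _ (by omega)]
    exact this
  have hdiv : ∀ i, i < w + 1 →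
      (runsL x).getD i 0 / k + us.getD i 0 = (runsL x').getD i 0 / k + us'.getD i 0 := by
    intro i hi
    have h := point i hi
    have e1 : ((runsL x).getD i 0 + us.getD i 0 * k) / k
        = (runsL x).getD i 0 / k + us.getD i 0 := Nat.add_mul_div_right _ _ hk
    have e2 : ((runsL x').getD i 0 + us'.getD i 0 * k) / k
        = (runsL x').getD i 0 / k + us'.getD i 0 := Nat.add_mul_div_right _ _ hk
    rw [← e1, ← e2, h]
  -- the increment multisets
  set c : Fin w → ℕ := fun i => us.getD i 0 with hc
  set c' : Fin w → ℕ := fun i => us'.getD i 0 with hc'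
  have hsumus : ∑ i ∈ Finset.range (w + 1), us.getD i 0 = u := by
    rw [← hs1, list_sum_getD, hl1, hrx]
  have hsumus' : ∑ i ∈ Finset.range (w + 1), us'.getD i 0 = u' := by
    rw [← hs1', list_sum_getD, hl1', hrx']
  set s : Multiset (Fin w) := ∑ i : Fin w, Multiset.replicate (c i) i with hs
  set s' : Multiset (Fin w) := ∑ i : Fin w, Multiset.replicate (c' i) i with hs'
  have hrange : Finset.range w ⊆ Finset.range (w + 1) :=
    Finset.range_subset_range.mpr (by omega)
  have hcard : Multiset.card s ≤ t := by
    rw [hs, multiset_card]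
    rw [← Finset.sum_range fun i => us.getD i 0]
    calc ∑ i ∈ Finset.range w, us.getD i 0
        ≤ ∑ i ∈ Finset.range (w + 1), us.getD i 0 :=
          Finset.sum_le_sum_of_subset hrange
      _ = u := hsumus
      _ ≤ t := hu
  have hcard' : Multiset.card s' ≤ t := by
    rw [hs', multiset_card]
    rw [← Finset.sum_range fun i => us'.getD i 0]
    calc ∑ i ∈ Finset.range w, us'.getD i 0
        ≤ ∑ i ∈ Finset.range (w + 1), us'.getD i 0 :=
          Finset.sum_le_sum_of_subset hrange
      _ = u' := hsumus'
      _ ≤ t := hu'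
  have hxg2 : (∑ i : Fin w, ((runsL x).getD (i : ℕ) 0 / k) • b i) = g := hxg
  have hxg2' : (∑ i : Fin w, ((runsL x').getD (i : ℕ) 0 / k) • b i) = g := hxg'
  have hmap : (s.map b).sum = (s'.map b).sum := by
    rw [hs, hs', multiset_hash, multiset_hash]
    have hh : ∑ i : Fin w, ((runsL x).getD (i : ℕ) 0 / k + c i) • b i
        = ∑ i : Fin w, ((runsL x').getD (i : ℕ) 0 / k + c' i) • b i := by
      refine Finset.sum_congr rfl fun i _ => ?_
      rw [show (runsL x).getD (i : ℕ) 0 / k + c i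
          = (runsL x').getD (i : ℕ) 0 / k + c' i from hdiv i (by omega)]
    simp only [add_nsmul] at hh
    rw [Finset.sum_add_distrib, Finset.sum_add_distrib, hxg2, hxg2'] at hh
    exact add_left_cancel hh
  have hss : s = s' := hSidon s s' hcard hcard' hmap
  have hcc : ∀ i : Fin w, c i = c' i := by
    intro i
    rw [← multiset_count c i, ← multiset_count c' i, ← hs, ← hs', hss]
  have hre : runsL x = runsL x' := by
    apply List.ext_getElem (by omega)
    intro i h1 h2
    have hi : i < w + 1 := by omega
    have hp := point i hi
    rw [← List.getD_eq_getElem _ 0 h1, ← List.getD_eq_getElem _ 0 h2]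
    rcases Nat.lt_or_ge i w with hw | hw
    · have hci := hcc ⟨i, hw⟩
      simp only [hc, hc'] at hci
      rw [hci] at hp
      omega
    · have hiw : i = w := by omega
      have hmid : ∑ j ∈ Finset.range w, us.getD j 0 = ∑ j ∈ Finset.range w, us'.getD j 0 := by
        refine Finset.sum_congr rfl fun j hj => ?_
        have := hcc ⟨j, Finset.mem_range.mp hj⟩
        simpa [hc, hc'] using this
      rw [Finset.sum_range_succ] at hsumus hsumus'
      have h9 : us.getD i 0 = us'.getD i 0 := by rw [hiw]; omega
      rw [h9] at hp
      omega
  exact eq_of_runsL_valsL hre (hv.symm.trans hv')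
lemma wt_ofFn : ∀ {n : ℕ} (f : Fin n → ZMod q),
    wt q (List.ofFn f) = (Finset.univ.filter fun i => f i ≠ 0).card
  | 0, f => by simp [wt]
  | (n+1), f => by
    rw [List.ofFn_succ]
    show wt q (f 0 :: _) = _
    rw [Finset.card_filter, Fin.sum_univ_succ, ← Finset.card_filter,
      ← wt_ofFn fun i => f i.succ]
    simp [wt, List.countP_cons]
    by_cases h : f 0 = 0 <;> simp [h, Nat.add_comm]
theorem stmt18 {G : Type*} [AddCommGroup G] [Fintype G]
    (q n w t k : ℕ) (hq : 2 ≤ q) (hn : 1 ≤ n) (hw1 : 1 ≤ w) (hwn : w ≤ n)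
    (ht : 1 ≤ t) (hk : 1 ≤ k)
    (b : Fin w → G) (hb : Function.Injective b)
    (hSidon : ∀ s s' : Multiset (Fin w), Multiset.card s ≤ t → Multiset.card s' ≤ t →
      (s.map b).sum = (s'.map b).sum → s = s') :
    ∃ C : Set (List (ZMod q)),
      (∀ x ∈ C, x.length = n ∧ wt q x = w) ∧
      CorrectsIns q k t C ∧ C.Finite ∧
      n.choose w * (q - 1) ^ w ≤ Fintype.card G * C.ncard := by
  classical
  have hq0 : NeZero q := ⟨by omega⟩
  set T : Finset (List (ZMod q)) :=
    ((Finset.univ : Finset (Fin n → ZMod q)).image List.ofFn).filter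
      (fun x => x.length = n ∧ wt q x = w) with hT
  have hTcard : n.choose w * (q - 1) ^ w ≤ T.card := by
    have hdom : Fintype.card
        ({s : Finset (Fin n) // s.card = w} × (Fin w → {a : ZMod q // a ≠ 0}))
        = n.choose w * (q - 1) ^ w := by
      rw [Fintype.card_prod, Fintype.card_finset_len, Fintype.card_fun, Fintype.card_fin,
        Fintype.card_fin, Fintype.card_subtype_compl, Fintype.card_subtype_eq, ZMod.card]
    set Φ : {s : Finset (Fin n) // s.card = w} × (Fin w → {a : ZMod q // a ≠ 0})
        → List (ZMod q) :=
      fun p => List.ofFn fun i =>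
        if h : i ∈ p.1.1 then (p.2 ((p.1.1.orderIsoOfFin p.1.2).symm ⟨i, h⟩)).1 else 0
      with hΦ
    have hmem : ∀ p, Φ p ∈ T := by
      rintro ⟨⟨s, hs⟩, v⟩
      refine Finset.mem_filter.mpr ⟨Finset.mem_image.mpr ⟨_, Finset.mem_univ _, rfl⟩,
        by simp [hΦ], ?_⟩
      rw [hΦ]
      simp only
      rw [wt_ofFn]
      have he : (Finset.univ.filter fun i : Fin n =>
          (if h : i ∈ s then (v ((s.orderIsoOfFin hs).symm ⟨i, h⟩)).1 else 0) ≠ 0) = s := by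
        ext i
        simp only [Finset.mem_filter, Finset.mem_univ, true_and]
        constructor
        · intro hne
          by_contra hi
          rw [dif_neg hi] at hne
          exact hne rfl
        · intro hi
          rw [dif_pos hi]
          exact (v _).2
      rw [he, hs]
    have hinj : Set.InjOn Φ ↑(Finset.univ :
        Finset ({s : Finset (Fin n) // s.card = w} × (Fin w → {a : ZMod q // a ≠ 0}))) := by
      rintro ⟨⟨s, hs⟩, v⟩ - ⟨⟨s', hs'⟩, v'⟩ - h
      have hf := List.ofFn_injective h
      have hfi : ∀ i : Fin n,
          (if hh : i ∈ s then (v ((s.orderIsoOfFin hs).symm ⟨i, hh⟩)).1 else 0)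
          = (if hh : i ∈ s' then (v' ((s'.orderIsoOfFin hs').symm ⟨i, hh⟩)).1 else 0) :=
        fun i => congrFun hf i
      have hss : s = s' := by
        ext i
        constructor <;> intro hi
        · by_contra hi'
          have h1 := hfi i
          rw [dif_pos hi, dif_neg hi'] at h1
          exact (v _).2 h1
        · by_contra hi'
          have h1 := hfi i
          rw [dif_neg hi', dif_pos hi] at h1
          exact (v' _).2 h1.symm
      subst hss
      have hv : v = v' := by
        funext j
        have hi : ((s.orderIsoOfFin hs) j : Fin n) ∈ s := ((s.orderIsoOfFin hs) j).2
        have h1 := hfi ((s.orderIsoOfFin hs) j : Fin n)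
        rw [dif_pos hi, dif_pos hi] at h1
        apply Subtype.ext
        have hps : hs = hs' := rfl
        subst hps
        simp only [Subtype.coe_eta, OrderIso.symm_apply_apply] at h1
        exact h1
      simp [hv]
    calc n.choose w * (q - 1) ^ w
        = Fintype.card _ := hdom.symm
      _ = (Finset.univ : Finset ({s : Finset (Fin n) // s.card = w}
            × (Fin w → {a : ZMod q // a ≠ 0}))).card := Finset.card_univ.symm
      _ ≤ T.card := Finset.card_le_card_of_injOn Φ (fun p _ => hmem p) hinj
  have hpart : T.card = ∑ g : G, (T.filter fun x => hashF k w b x = g).card :=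
    Finset.card_eq_sum_card_fiberwise fun x _ => Finset.mem_univ _
  obtain ⟨g, -, hg⟩ := Finset.exists_max_image Finset.univ
    (fun g : G => (T.filter fun x => hashF k w b x = g).card) Finset.univ_nonempty
  refine ⟨↑(T.filter fun x => hashF k w b x = g), ?_, ?_,
    (T.filter fun x => hashF k w b x = g).finite_toSet, ?_⟩
  · intro x hx
    have h1 := Finset.mem_filter.mp hx
    exact (Finset.mem_filter.mp h1.1).2
  · have hsub : ∀ x ∈ (↑(T.filter fun x => hashF k w b x = g) : Set (List (ZMod q))),
        x ∈ {x : List (ZMod q) | x.length = n ∧ wt q x = w ∧ hashF k w b x = g} := by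
      intro x hx
      have h1 := Finset.mem_filter.mp hx
      exact ⟨(Finset.mem_filter.mp h1.1).2.1, (Finset.mem_filter.mp h1.1).2.2, h1.2⟩
    intro x hx x' hx' y h h'
    exact code_corrects n w t k hk b hSidon g x (hsub x hx) x' (hsub x' hx') y h h'
  · rw [Set.ncard_coe_finset]
    calc n.choose w * (q - 1) ^ w ≤ T.card := hTcard
      _ = ∑ g : G, (T.filter fun x => hashF k w b x = g).card := hpart
      _ ≤ Fintype.card G * (T.filter fun x => hashF k w b x = g).card := by
          have h2 := Finset.sum_le_card_nsmul Finset.univ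
            (fun g' : G => (T.filter fun x => hashF k w b x = g').card)
            ((T.filter fun x => hashF k w b x = g).card)
            (fun g' _ => hg g' (Finset.mem_univ g'))
          simpa [Finset.card_univ, smul_eq_mul] using h2
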